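/- Let N, d, d' be positive natural numbers, let A be an N×N real matrix with all entries nonnegative, let ε be a real number with ε > -1, let W be a d×d' real matrix, let X be an N×d real feature matrix, and let S be a nonempty subset of {1,…,N}. Then: (i) for every N×d real matrix X̂ (a feature transformation of the graph) there exists p̂ ∈ ℝ^d such that z_{A,ε,W}(X') = z_{A,ε,W}(X̂); and (ii) for every N×N real matrix Â (a link transformation of the graph) there exists p̂ ∈ ℝ^d such that z_{A,ε,W}(X') = z_{Â,ε,W}(X); where in each case X' is the SUPT-prompted feature matrix obtained from X, S and p̂. (SUPT on a nonempty node subset can reproduce the effect of an arbitrary feature transformation and of an arbitrary link transformation of the input graph on the sum-pooled single-layer GIN embedding.) -/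

import Mathlib

open Matrix BigOperators

/-- Single-layer GIN graph embedding with sum readout:
the `j'`-th entry is the sum of the rows of `(A + (1+ε)•I) * X * W`. -/
noncomputable def ginEmbed {N d d' : ℕ} (A : Matrix (Fin N) (Fin N) ℝ) (ε : ℝ)
    (W : Matrix (Fin d) (Fin d') ℝ) (X : Matrix (Fin N) (Fin d) ℝ) : Fin d' → ℝ :=
  fun j' => ∑ i, ((A + (1 + ε) • (1 : Matrix (Fin N) (Fin N) ℝ)) * X * W) i j'

/-- SUPT-prompted feature matrix: add the prompt vector `phat` to the rows indexed by `S`. -/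
noncomputable def suptPrompt {N d : ℕ} (X : Matrix (Fin N) (Fin d) ℝ) (S : Finset (Fin N))
    (phat : Fin d → ℝ) : Matrix (Fin N) (Fin d) ℝ :=
  Matrix.of fun i j => if i ∈ S then X i j + phat j else X i j

/-- GPF-prompted feature matrix: add the prompt vector `p` to every row. -/
noncomputable def gpfPrompt {N d : ℕ} (X : Matrix (Fin N) (Fin d) ℝ)
    (p : Fin d → ℝ) : Matrix (Fin N) (Fin d) ℝ :=
  Matrix.of fun i j => X i j + p j

section Aux

variable {N d d' : ℕ}

lemma sum_rows_mul (B : Matrix (Fin N) (Fin d) ℝ) (W : Matrix (Fin d) (Fin d') ℝ)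
    (j' : Fin d') : (∑ i, (B * W) i j') = ∑ l, (∑ i, B i l) * W l j' := by
  simp only [Matrix.mul_apply, Finset.sum_mul]
  exact Finset.sum_comm

lemma suptPrompt_eq_add (X : Matrix (Fin N) (Fin d) ℝ) (S : Finset (Fin N))
    (phat : Fin d → ℝ) :
    suptPrompt X S phat = X + Matrix.of (fun i j => if i ∈ S then phat j else 0) := by
  ext i j
  simp [suptPrompt]
  split <;> simp

lemma ginEmbed_suptPrompt (A : Matrix (Fin N) (Fin N) ℝ) (ε : ℝ)
    (W : Matrix (Fin d) (Fin d') ℝ) (X : Matrix (Fin N) (Fin d) ℝ)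
    (S : Finset (Fin N)) (phat : Fin d → ℝ) (j' : Fin d') :
    ginEmbed A ε W (suptPrompt X S phat) j' =
      ginEmbed A ε W X j' +
        ∑ l, ((∑ i, ∑ k ∈ S, (A + (1 + ε) • (1 : Matrix (Fin N) (Fin N) ℝ)) i k) * phat l)
          * W l j' := by
  set M := A + (1 + ε) • (1 : Matrix (Fin N) (Fin N) ℝ) with hM
  have : M * (suptPrompt X S phat) * W =
      M * X * W + M * Matrix.of (fun i j => if i ∈ S then phat j else 0) * W := by
    rw [suptPrompt_eq_add, Matrix.mul_add, Matrix.add_mul]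
  simp only [ginEmbed, ← hM, this, Matrix.add_apply, Finset.sum_add_distrib]
  congr 1
  rw [sum_rows_mul]
  congr 1
  ext l
  congr 1
  simp only [Matrix.mul_apply, Matrix.of_apply, mul_ite, mul_zero]
  rw [Finset.sum_mul]
  congr 1
  ext i
  rw [Finset.sum_ite_mem, Finset.univ_inter, Finset.sum_mul]

end Aux

theorem supt_reproduces_feature_and_link_transformations
    (N d d' : ℕ) (hN : 0 < N) (hd : 0 < d) (hd' : 0 < d')
    (A : Matrix (Fin N) (Fin N) ℝ) (hA : ∀ i k, 0 ≤ A i k)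
    (ε : ℝ) (hε : -1 < ε)
    (W : Matrix (Fin d) (Fin d') ℝ)
    (X : Matrix (Fin N) (Fin d) ℝ)
    (S : Finset (Fin N)) (hS : S.Nonempty) :
    (∀ Xhat : Matrix (Fin N) (Fin d) ℝ, ∃ phat : Fin d → ℝ,
        ginEmbed A ε W (suptPrompt X S phat) = ginEmbed A ε W Xhat) ∧
    (∀ Ahat : Matrix (Fin N) (Fin N) ℝ, ∃ phat : Fin d → ℝ,
        ginEmbed A ε W (suptPrompt X S phat) = ginEmbed Ahat ε W X) := by
  set M := A + (1 + ε) • (1 : Matrix (Fin N) (Fin N) ℝ) with hM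
  set s : ℝ := ∑ i, ∑ k ∈ S, M i k with hs
  have hspos : 0 < s := by
    rw [hs]
    refine lt_of_lt_of_eq ?_ Finset.sum_comm.symm
    have : ∀ k ∈ S, 0 < ∑ i, M i k := by
      intro k _
      have h1 : ∑ i, M i k = (∑ i, A i k) + (1 + ε) := by
        simp only [hM, Matrix.add_apply, Matrix.smul_apply, Matrix.one_apply,
          Finset.sum_add_distrib, smul_eq_mul, mul_ite, mul_one, mul_zero]
        rw [Finset.sum_ite_eq' Finset.univ k (fun _ => 1 + ε)]
        simp
      rw [h1]
      have h2 : 0 ≤ ∑ i, A i k := Finset.sum_nonneg fun i _ => hA i k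
      linarith
    exact Finset.sum_pos this hS
  -- key: for any B, can match sum of rows of B * W
  have key : ∀ B : Matrix (Fin N) (Fin d) ℝ, ∃ phat : Fin d → ℝ,
      ginEmbed A ε W (suptPrompt X S phat) = fun j' => ∑ i, (B * W) i j' := by
    intro B
    refine ⟨fun l => s⁻¹ * ((∑ i, B i l) - (∑ i, (M * X) i l)), ?_⟩
    funext j'
    rw [ginEmbed_suptPrompt, sum_rows_mul B W j']
    have hgin : ginEmbed A ε W X j' = ∑ l, (∑ i, (M * X) i l) * W l j' := by
      simp only [ginEmbed, ← hM]
      rw [← sum_rows_mul (M * X) W j']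
    rw [hgin, ← Finset.sum_add_distrib]
    congr 1
    ext l
    rw [← hs]
    field_simp
    ring
  constructor
  · intro Xhat
    obtain ⟨phat, hphat⟩ := key (M * Xhat)
    refine ⟨phat, ?_⟩
    rw [hphat]
    funext j'
    simp only [ginEmbed, ← hM, Matrix.mul_assoc]
  · intro Ahat
    obtain ⟨phat, hphat⟩ := key ((Ahat + (1 + ε) • (1 : Matrix (Fin N) (Fin N) ℝ)) * X)
    refine ⟨phat, ?_⟩
    rw [hphat]
    funext j'
    simp only [ginEmbed, Matrix.mul_assoc]
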